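/- Let 0 → Z/2Z →^ι Γ̃ →^π Γ → 1 be a central extension with τ = ι(1), and suppose τ is nontrivial in Γ̃ but becomes trivial in every finite quotient of Γ̃. Then for every finite-index subgroup H̃ ≤ Γ̃ containing τ, the central extension 0 → Z/2Z → H̃ → π(H̃) → 1 does not split. -/

import Mathlib

/-- Let `0 → Z/2Z → Γ̃ →^π Γ → 1` be a central extension with `τ` the nontrivial
element of the kernel (so `ker π = {1, τ}`), and suppose `τ ≠ 1` but `τ` dies in
every finite quotient of `Γ̃`. Then for every finite-index subgroup `H̃ ≤ Γ̃`
containing `τ`, the induced central extension `0 → Z/2Z → H̃ → π(H̃) → 1` does not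
split. -/
theorem stmt16 {Gt G : Type*} [Group Gt] [Group G] (π : Gt →* G) (τ : Gt)
    (hτ2 : τ ^ 2 = 1) (hτne : τ ≠ 1)
    (hcentral : ∀ g : Gt, Commute τ g)
    (hker : ∀ g : Gt, π g = 1 ↔ g = 1 ∨ g = τ)
    (hπ : Function.Surjective π)
    (hfin : ∀ (Q : Type) [Group Q] [Finite Q] (f : Gt →* Q), f τ = 1) :
    ∀ Ht : Subgroup Gt, Ht.FiniteIndex → τ ∈ Ht →
      ¬ ∃ s : (Subgroup.map π Ht) →* Gt,
          (∀ x : Subgroup.map π Ht, s x ∈ Ht) ∧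
          ∀ x : Subgroup.map π Ht, π (s x) = (x : G) := by
  intro Ht hFI hτHt
  rintro ⟨s, hsH, hsπ⟩
  -- membership of π h in the image subgroup
  have hmem : ∀ h : Ht, π (h : Gt) ∈ Subgroup.map π Ht := fun h => ⟨h, h.2, rfl⟩
  -- the discrepancy map
  set c : Ht → Gt := fun h => (h : Gt) * (s ⟨π (h : Gt), hmem h⟩)⁻¹ with hc
  have hπc : ∀ h : Ht, π (c h) = 1 := by
    intro h
    simp only [hc, map_mul, map_inv]
    rw [hsπ ⟨π (h : Gt), hmem h⟩]
    exact mul_inv_cancel _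
  have hcmem : ∀ h : Ht, c h = 1 ∨ c h = τ := fun h => (hker _).1 (hπc h)
  have hccomm : ∀ (h : Ht) (g : Gt), Commute (c h) g := by
    intro h g
    rcases hcmem h with h1 | h1 <;> rw [h1]
    · exact Commute.one_left g
    · exact hcentral g
  have cone : c 1 = 1 := by
    have h1 : (⟨π ((1 : Ht) : Gt), hmem 1⟩ : Subgroup.map π Ht) = 1 := by
      ext; simp
    simp only [hc]
    rw [h1, map_one, inv_one, mul_one, Subgroup.coe_one]
  have cmul : ∀ h k : Ht, c (h * k) = c h * c k := by
    intro h k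
    have hprod : (⟨π ((h * k : Ht) : Gt), hmem (h * k)⟩ : Subgroup.map π Ht)
        = ⟨π (h : Gt), hmem h⟩ * ⟨π (k : Gt), hmem k⟩ := by
      ext; simp
    have hcomm : c k * (s ⟨π (h : Gt), hmem h⟩)⁻¹
        = (s ⟨π (h : Gt), hmem h⟩)⁻¹ * c k := (hccomm k _).eq
    calc c (h * k) = (h : Gt) * (k : Gt) * (s ⟨π (h : Gt), hmem h⟩ * s ⟨π (k : Gt), hmem k⟩)⁻¹ := by
          simp only [hc]
          rw [hprod, map_mul, Subgroup.coe_mul]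
      _ = (h : Gt) * (c k * (s ⟨π (h : Gt), hmem h⟩)⁻¹) := by
          simp only [hc, mul_inv_rev]; group
      _ = (h : Gt) * ((s ⟨π (h : Gt), hmem h⟩)⁻¹ * c k) := by rw [hcomm]
      _ = c h * c k := by simp only [hc]; group
  -- package as a monoid hom
  let C : Ht →* Gt := { toFun := c, map_one' := cone, map_mul' := cmul }
  -- τ is not in the kernel of C
  have hπτ : π τ = 1 := (hker τ).2 (Or.inr rfl)
  have hCτ : C ⟨τ, hτHt⟩ = τ := by
    have h1 : (⟨π ((⟨τ, hτHt⟩ : Ht) : Gt), hmem ⟨τ, hτHt⟩⟩ : Subgroup.map π Ht) = 1 := by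
      ext; simpa using hπτ
    show c ⟨τ, hτHt⟩ = τ
    simp [hc, h1]
  -- C.ker has finite index in Ht since the range of C is contained in {1, τ}
  have hrange : (C.range : Set Gt) ⊆ {1, τ} := by
    rintro x ⟨h, rfl⟩
    exact hcmem h
  have hrfin : Finite C.range := by
    have : (C.range : Set Gt).Finite :=
      Set.Finite.subset ((Set.finite_singleton τ).insert 1) hrange
    exact this
  have hkerFI : C.ker.FiniteIndex := by
    constructor
    rw [Subgroup.index_ker]
    exact Nat.card_ne_zero.2 ⟨⟨1, one_mem _⟩, hrfin⟩
  -- push kernel into Gt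
  let M : Subgroup Gt := C.ker.map Ht.subtype
  have hMHt : M ≤ Ht := by
    rintro x ⟨y, _, rfl⟩; exact y.2
  have hMsub : M.subgroupOf Ht = C.ker := by
    unfold M
    rw [Subgroup.subgroupOf]
    exact Subgroup.comap_map_eq_self_of_injective Ht.subtype_injective _
  have hMFI : M.FiniteIndex := by
    constructor
    have := Subgroup.relIndex_mul_index hMHt
    rw [Subgroup.relIndex, hMsub] at this
    rw [← this]
    exact Nat.mul_ne_zero hkerFI.index_ne_zero hFI.index_ne_zero
  haveI := hMFI
  -- finite quotient, transported to Type 0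
  haveI : Finite (Gt ⧸ M) := Subgroup.finite_quotient_of_finiteIndex (H := M)
  obtain ⟨n, ⟨e0⟩⟩ := Finite.exists_equiv_fin (Gt ⧸ M)
  let φ : Equiv.Perm (Gt ⧸ M) →* Equiv.Perm (Fin n) :=
    { toFun := fun p => e0.permCongr p
      map_one' := by ext x; simp
      map_mul' := fun p q => by ext x; simp [Equiv.permCongr] }
  let f : Gt →* Equiv.Perm (Fin n) :=
    φ.comp (MulAction.toPermHom Gt (Gt ⧸ M))
  have hfτ : f τ = 1 := hfin (Equiv.Perm (Fin n)) f
  have h1 : (MulAction.toPermHom Gt (Gt ⧸ M)) τ = 1 := by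
    apply (Equiv.permCongr e0).injective
    have h2 : φ ((MulAction.toPermHom Gt (Gt ⧸ M)) τ) = φ 1 :=
      hfτ.trans φ.map_one.symm
    exact h2
  have hτcore : τ ∈ M.normalCore := by
    rw [Subgroup.normalCore_eq_ker]
    exact h1
  have hτM : τ ∈ M := M.normalCore_le hτcore
  obtain ⟨y, hy, hyτ⟩ := hτM
  have : y = ⟨τ, hτHt⟩ := Subtype.ext hyτ
  rw [this] at hy
  have : τ = 1 := by rw [← hCτ]; exact hy
  exact hτne this
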